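/- A presheaf of sets on a complete Boolean algebra B is a sheaf (for the canonical sup-topology) if and only if it carries disjoint joins to products. -/

import Mathlib

universe u v

/-- A set-valued presheaf on a complete Boolean algebra (viewed as the frame of a
Boolean locale). -/
structure SetPresheaf (B : Type u) [CompleteBooleanAlgebra B] where
  obj : B → Type v
  res : ∀ {U V : B}, U ≤ V → obj V → obj U
  res_refl : ∀ {U : B} (x : obj U), res le_rfl x = x
  res_comp : ∀ {U V W : B} (h1 : U ≤ V) (h2 : V ≤ W) (x : obj W),
    res h1 (res h2 x) = res (h1.trans h2) x

namespace SetPresheaf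

variable {B : Type u} [CompleteBooleanAlgebra B] (F : SetPresheaf.{u, v} B)

/-- The sheaf condition for a presheaf on a locale: the value at `⊥` is a singleton,
binary gluing squares are pullbacks, and directed joins go to limits. -/
def IsSheaf : Prop :=
  (Nonempty (F.obj ⊥) ∧ Subsingleton (F.obj ⊥)) ∧
  (∀ V V' : B, Function.Bijective
    (fun x : F.obj (V ⊔ V') =>
      (⟨(F.res le_sup_left x, F.res le_sup_right x),
        by rw [F.res_comp, F.res_comp]⟩ :
        {p : F.obj V × F.obj V' //
          F.res inf_le_left p.1 = F.res inf_le_right p.2}))) ∧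
  (∀ D : Set B, DirectedOn (· ≤ ·) D → Function.Bijective
    (fun x : F.obj (sSup D) =>
      (⟨fun U : D => F.res (le_sSup U.2) x,
        by intro U V h; rw [F.res_comp]⟩ :
        {f : ∀ U : D, F.obj U //
          ∀ (U V : D) (h : (U : B) ≤ (V : B)), F.res h (f V) = f U})))

/-- A presheaf carries disjoint joins to products if for every pairwise disjoint
family, the canonical map to the product of the values is a bijection. -/
def CarriesDisjointJoinsToProducts : Prop :=
  ∀ (I : Type u) (a : I → B), (Pairwise fun i j => a i ⊓ a j = ⊥) →
    Function.Bijective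
      (fun (x : F.obj (⨆ i, a i)) (i : I) => F.res (le_iSup a i) x)

end SetPresheaf

namespace SetPresheaf
variable {B : Type u} [CompleteBooleanAlgebra B] (F : SetPresheaf.{u, v} B)

lemma aux_res_inj {U V : B} (h1 : U ≤ V) (h2 : V ≤ U) :
    Function.Injective (F.res h1) := by
  intro x y hxy
  have := congrArg (F.res h2) hxy
  rwa [F.res_comp, F.res_comp, F.res_refl, F.res_refl] at this

lemma aux_res_surj {U V : B} (h1 : U ≤ V) (h2 : V ≤ U) :
    Function.Surjective (F.res h1) := by
  intro x
  exact ⟨F.res h2 x, by rw [F.res_comp, F.res_refl]⟩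

/-- Injectivity consequence of carrying disjoint joins to products. -/
lemma aux_inj_of_carries (H : F.CarriesDisjointJoinsToProducts)
    {I : Type u} {a : I → B} (hd : Pairwise fun i j => a i ⊓ a j = ⊥)
    {U : B} (h1 : ∀ i, a i ≤ U) (h2 : U ≤ ⨆ i, a i) {x y : F.obj U}
    (h : ∀ i, F.res (h1 i) x = F.res (h1 i) y) : x = y := by
  have hs : (⨆ i, a i) ≤ U := iSup_le h1
  refine aux_res_inj F hs h2 ?_
  apply (H I a hd).1
  funext i
  show F.res (le_iSup a i) (F.res hs x) = F.res (le_iSup a i) (F.res hs y)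
  rw [F.res_comp, F.res_comp]
  exact h i

/-- Surjectivity consequence of carrying disjoint joins to products. -/
lemma aux_surj_of_carries (H : F.CarriesDisjointJoinsToProducts)
    {I : Type u} {a : I → B} (hd : Pairwise fun i j => a i ⊓ a j = ⊥)
    {U : B} (h1 : ∀ i, a i ≤ U) (h2 : U ≤ ⨆ i, a i) (p : ∀ i, F.obj (a i)) :
    ∃ x : F.obj U, ∀ i, F.res (h1 i) x = p i := by
  obtain ⟨z, hz⟩ := (H I a hd).2 p
  refine ⟨F.res h2 z, fun i => ?_⟩
  rw [F.res_comp]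
  exact congrFun hz i

lemma aux_subsingleton_of_carries (H : F.CarriesDisjointJoinsToProducts)
    {U : B} (hU : U ≤ ⊥) : Subsingleton (F.obj U) := by
  constructor
  intro x y
  exact aux_inj_of_carries F H (I := PEmpty.{u+1})
    (a := fun i => i.elim) (fun i => i.elim) (fun i => i.elim)
    (hU.trans (by simp)) (fun i => i.elim)

lemma aux_nonempty_of_carries (H : F.CarriesDisjointJoinsToProducts)
    {U : B} (hU : U ≤ ⊥) : Nonempty (F.obj U) := by
  obtain ⟨x, -⟩ := aux_surj_of_carries F H (I := PEmpty.{u+1})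
    (a := fun i => i.elim) (fun i => i.elim) (fun i => i.elim)
    (hU.trans (by simp)) (fun i => i.elim)
  exact ⟨x⟩

end SetPresheaf

namespace SetPresheaf
variable {B : Type u} [CompleteBooleanAlgebra B] (F : SetPresheaf.{u, v} B)

def pairFam (V W : B) : ULift.{u} Bool → B := fun t => bif t.down then V else W

lemma pairFam_disj {V W : B} (hVW : V ⊓ W ≤ ⊥) :
    Pairwise fun i j => pairFam V W i ⊓ pairFam V W j = ⊥ := by
  rintro ⟨(_|_)⟩ ⟨(_|_)⟩ hij
  · exact absurd rfl hij
  · exact le_bot_iff.mp ((inf_comm W V).le.trans hVW)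
  · exact le_bot_iff.mp hVW
  · exact absurd rfl hij

lemma pairFam_le {V W U : B} (h1 : V ≤ U) (h2 : W ≤ U) :
    ∀ t, pairFam V W t ≤ U := by rintro ⟨(_|_)⟩ <;> assumption

lemma pairFam_cov {V W U : B} (h3 : U ≤ V ⊔ W) : U ≤ ⨆ t, pairFam V W t :=
  h3.trans (sup_le (le_iSup (pairFam V W) ⟨true⟩) (le_iSup (pairFam V W) ⟨false⟩))

lemma aux_pair_inj (H : F.CarriesDisjointJoinsToProducts)
    {V W U : B} (hVW : V ⊓ W ≤ ⊥) (h1 : V ≤ U) (h2 : W ≤ U) (h3 : U ≤ V ⊔ W)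
    {x y : F.obj U} (e1 : F.res h1 x = F.res h1 y) (e2 : F.res h2 x = F.res h2 y) :
    x = y := by
  refine aux_inj_of_carries F H (pairFam_disj hVW) (pairFam_le h1 h2) (pairFam_cov h3) ?_
  rintro ⟨(_|_)⟩
  · exact e2
  · exact e1

lemma aux_pair_surj (H : F.CarriesDisjointJoinsToProducts)
    {V W U : B} (hVW : V ⊓ W ≤ ⊥) (h1 : V ≤ U) (h2 : W ≤ U) (h3 : U ≤ V ⊔ W)
    (u : F.obj V) (w : F.obj W) :
    ∃ x : F.obj U, F.res h1 x = u ∧ F.res h2 x = w := by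
  obtain ⟨x, hx⟩ := aux_surj_of_carries F H (pairFam_disj hVW)
    (pairFam_le h1 h2) (pairFam_cov h3)
    (fun t => Bool.rec (motive := fun b => F.obj (bif b then V else W)) w u t.down)
  exact ⟨x, hx ⟨true⟩, hx ⟨false⟩⟩

end SetPresheaf

namespace SetPresheaf
variable {B : Type u} [CompleteBooleanAlgebra B] (F : SetPresheaf.{u, v} B)

/-- Disjointification of a set via a well-ordering. -/
noncomputable def bfam (D : Set B) : D → B :=
  fun d => (d : B) ⊓ (⨆ e : {e : D // WellOrderingRel e d}, ((e : D) : B))ᶜ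

lemma bfam_le {D : Set B} (d : D) : bfam D d ≤ (d : B) := inf_le_left

lemma bfam_disj (D : Set B) : Pairwise fun i j => bfam D i ⊓ bfam D j = ⊥ := by
  have key : ∀ i j : D, WellOrderingRel i j → bfam D i ⊓ bfam D j = ⊥ := by
    intro i j h
    refine le_antisymm ?_ bot_le
    have h1 : bfam D i ≤ ⨆ e : {e : D // WellOrderingRel e j}, ((e : D) : B) :=
      (bfam_le i).trans (le_iSup (fun e : {e : D // WellOrderingRel e j} => ((e : D) : B)) ⟨i, h⟩)
    have h2 : bfam D j ≤ (⨆ e : {e : D // WellOrderingRel e j}, ((e : D) : B))ᶜ :=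
      inf_le_right
    exact (inf_le_inf h1 h2).trans inf_compl_eq_bot.le
  intro i j hij
  rcases trichotomous_of WellOrderingRel i j with h | h | h
  · exact key i j h
  · exact absurd h hij
  · exact (inf_comm _ _).trans (key j i h)

lemma bfam_cov {D : Set B} (d : D) : (d : B) ≤ ⨆ e, bfam D e := by
  refine IsWellFounded.induction WellOrderingRel
    (motive := fun d : D => (d : B) ≤ ⨆ e, bfam D e) d ?_
  intro d IH
  have hd : (d : B) = bfam D d ⊔ ((d : B) ⊓ ⨆ e : {e : D // WellOrderingRel e d}, ((e : D) : B)) := by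
    rw [bfam, ← inf_sup_left, compl_sup_eq_top, inf_top_eq]
  calc (d : B) = _ := hd
    _ ≤ ⨆ e, bfam D e := sup_le (le_iSup _ d)
        (inf_le_right.trans (iSup_le fun e => IH e.1 e.2))

lemma sSup_le_iSup_bfam (D : Set B) : sSup D ≤ ⨆ e, bfam D e :=
  sSup_le fun d hd => bfam_cov ⟨d, hd⟩

lemma bfam_le_sSup {D : Set B} (d : D) : bfam D d ≤ sSup D :=
  (bfam_le d).trans (le_sSup d.2)

lemma aux_dir_inj (H : F.CarriesDisjointJoinsToProducts) {D : Set B}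
    {x y : F.obj (sSup D)}
    (h : ∀ U : D, F.res (le_sSup U.2) x = F.res (le_sSup U.2) y) : x = y := by
  refine aux_inj_of_carries F H (bfam_disj D) (fun d => bfam_le_sSup d)
    (sSup_le_iSup_bfam D) ?_
  intro d
  have : ∀ z : F.obj (sSup D),
      F.res (bfam_le_sSup d) z = F.res (bfam_le d) (F.res (le_sSup d.2) z) := by
    intro z; rw [F.res_comp]
  rw [this x, this y, h d]

lemma aux_dir_surj (H : F.CarriesDisjointJoinsToProducts) {D : Set B}
    (hD : DirectedOn (· ≤ ·) D) (f : ∀ U : D, F.obj U)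
    (hf : ∀ (U V : D) (h : (U : B) ≤ (V : B)), F.res h (f V) = f U) :
    ∃ x : F.obj (sSup D), ∀ U : D, F.res (le_sSup U.2) x = f U := by
  obtain ⟨x, hx⟩ := aux_surj_of_carries F H (bfam_disj D) (fun d => bfam_le_sSup d)
    (sSup_le_iSup_bfam D) (fun d => F.res (bfam_le d) (f d))
  refine ⟨x, fun U => ?_⟩
  have hdisj : Pairwise fun i j : D => ((U : B) ⊓ bfam D i) ⊓ ((U : B) ⊓ bfam D j) = ⊥ := by
    intro i j hij
    refine le_antisymm ?_ bot_le
    refine (inf_le_inf inf_le_right inf_le_right).trans ?_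
    exact (bfam_disj D hij).le
  have hcov : (U : B) ≤ ⨆ d : D, (U : B) ⊓ bfam D d := by
    calc (U : B) ≤ (U : B) ⊓ ⨆ d, bfam D d :=
          le_inf le_rfl ((le_sSup U.2).trans (sSup_le_iSup_bfam D))
      _ = ⨆ d : D, (U : B) ⊓ bfam D d := inf_iSup_eq _ _
  refine aux_inj_of_carries F H hdisj (fun d => inf_le_left) hcov ?_
  intro d
  obtain ⟨W, hWD, hUW, hdW⟩ := hD U.1 U.2 d.1 d.2
  set Wd : D := ⟨W, hWD⟩
  have hbdW : (U : B) ⊓ bfam D d ≤ (W : B) := le_trans inf_le_left hUW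
  -- LHS
  have l1 : F.res (inf_le_left : (U:B) ⊓ bfam D d ≤ (U:B)) (F.res (le_sSup U.2) x)
      = F.res hbdW (f Wd) := by
    rw [F.res_comp]
    have : F.res ((inf_le_left.trans (le_sSup U.2) : (U:B) ⊓ bfam D d ≤ sSup D)) x
        = F.res (inf_le_right : (U:B) ⊓ bfam D d ≤ bfam D d) (F.res (bfam_le_sSup d) x) := by
      rw [F.res_comp]
    rw [this, hx d, F.res_comp, ← hf d Wd hdW, F.res_comp]
  have l2 : F.res (inf_le_left : (U:B) ⊓ bfam D d ≤ (U:B)) (f U)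
      = F.res hbdW (f Wd) := by
    rw [← hf U Wd hUW, F.res_comp]
  rw [l1, l2]

end SetPresheaf

namespace SetPresheaf
variable {B : Type u} [CompleteBooleanAlgebra B] (F : SetPresheaf.{u, v} B)

lemma aux_backward (H : F.CarriesDisjointJoinsToProducts) : F.IsSheaf := by
  refine ⟨⟨aux_nonempty_of_carries F H le_rfl, aux_subsingleton_of_carries F H le_rfl⟩,
    fun V V' => ⟨?_, ?_⟩, fun D hD => ⟨?_, ?_⟩⟩
  · -- binary injectivity
    intro x y h
    have h1 : F.res le_sup_left x = F.res le_sup_left y :=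
      congrArg (fun z => z.val.1) h
    have h2 : F.res le_sup_right x = F.res le_sup_right y :=
      congrArg (fun z => z.val.2) h
    have hdisj : V ⊓ (V' ⊓ Vᶜ) ≤ ⊥ :=
      (inf_le_inf_left V inf_le_right).trans inf_compl_eq_bot.le
    have hcov : V ⊔ V' ≤ V ⊔ V' ⊓ Vᶜ := by
      rw [sup_inf_left, sup_compl_eq_top, inf_top_eq]
    refine aux_pair_inj F H hdisj le_sup_left (inf_le_left.trans le_sup_right) hcov h1 ?_
    have e2 : ∀ z : F.obj (V ⊔ V'),
        F.res (inf_le_left.trans le_sup_right : V' ⊓ Vᶜ ≤ V ⊔ V') z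
          = F.res (inf_le_left : V' ⊓ Vᶜ ≤ V') (F.res le_sup_right z) := by
      intro z; rw [F.res_comp]
    rw [e2 x, e2 y, h2]
  · -- binary surjectivity
    rintro ⟨⟨u, v⟩, hc⟩
    have hdisj : V ⊓ (V' ⊓ Vᶜ) ≤ ⊥ :=
      (inf_le_inf_left V inf_le_right).trans inf_compl_eq_bot.le
    have hcov : V ⊔ V' ≤ V ⊔ V' ⊓ Vᶜ := by
      rw [sup_inf_left, sup_compl_eq_top, inf_top_eq]
    have hW : V' ⊓ Vᶜ ≤ V ⊔ V' := inf_le_left.trans le_sup_right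
    obtain ⟨x, hxV, hxW⟩ := aux_pair_surj F H hdisj le_sup_left hW hcov u
      (F.res (inf_le_left : V' ⊓ Vᶜ ≤ V') v)
    have hdisj2 : (V ⊓ V') ⊓ (V' ⊓ Vᶜ) ≤ ⊥ :=
      (inf_le_inf inf_le_left inf_le_right).trans inf_compl_eq_bot.le
    have hcov2 : V' ≤ (V ⊓ V') ⊔ (V' ⊓ Vᶜ) := by
      rw [inf_comm V V', ← inf_sup_left, sup_compl_eq_top, inf_top_eq]
    have hxV' : F.res le_sup_right x = v := by
      refine aux_pair_inj F H hdisj2 inf_le_right inf_le_left hcov2 ?_ ?_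
      · -- restrictions to V ⊓ V'
        rw [F.res_comp]
        have : F.res (inf_le_right.trans le_sup_right : V ⊓ V' ≤ V ⊔ V') x
            = F.res (inf_le_left : V ⊓ V' ≤ V) (F.res le_sup_left x) := by
          rw [F.res_comp]
        rw [this, hxV, hc]
      · -- restrictions to V' ⊓ Vᶜ
        rw [F.res_comp]
        exact hxW
    exact ⟨x, Subtype.ext (Prod.ext hxV hxV')⟩
  · -- directed injectivity
    intro x y h
    have hv := congrArg Subtype.val h
    exact aux_dir_inj F H (fun U => congrFun hv U)
  · -- directed surjectivity
    rintro ⟨f, hf⟩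
    obtain ⟨x, hx⟩ := aux_dir_surj F H hD f hf
    exact ⟨x, Subtype.ext (funext fun U => hx U)⟩

end SetPresheaf

namespace SetPresheaf
variable {B : Type u} [CompleteBooleanAlgebra B] (F : SetPresheaf.{u, v} B)

lemma aux_bot_subsingleton (hs : F.IsSheaf) {U : B} (hU : U ≤ ⊥)
    (x y : F.obj U) : x = y := by
  refine aux_res_inj F (bot_le : (⊥ : B) ≤ U) hU ?_
  have := hs.1.2
  exact Subsingleton.elim _ _

lemma aux_bot_nonempty (hs : F.IsSheaf) {U : B} (hU : U ≤ ⊥) :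
    Nonempty (F.obj U) := by
  obtain ⟨x⟩ := hs.1.1
  exact ⟨F.res hU x⟩

lemma aux_sh_pair_inj (hs : F.IsSheaf) {V W U : B}
    (h1 : V ≤ U) (h2 : W ≤ U) (h3 : U ≤ V ⊔ W) {x y : F.obj U}
    (e1 : F.res h1 x = F.res h1 y) (e2 : F.res h2 x = F.res h2 y) : x = y := by
  refine aux_res_inj F (sup_le h1 h2) h3 ?_
  refine (hs.2.1 V W).1 ?_
  refine Subtype.ext (Prod.ext ?_ ?_)
  · show F.res le_sup_left (F.res (sup_le h1 h2) x)
      = F.res le_sup_left (F.res (sup_le h1 h2) y)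
    rw [F.res_comp, F.res_comp]; exact e1
  · show F.res le_sup_right (F.res (sup_le h1 h2) x)
      = F.res le_sup_right (F.res (sup_le h1 h2) y)
    rw [F.res_comp, F.res_comp]; exact e2

lemma aux_sh_pair_surj (hs : F.IsSheaf) {V W U : B} (hVW : V ⊓ W ≤ ⊥)
    (h1 : V ≤ U) (h2 : W ≤ U) (h3 : U ≤ V ⊔ W) (u : F.obj V) (w : F.obj W) :
    ∃ x : F.obj U, F.res h1 x = u ∧ F.res h2 x = w := by
  have hc : F.res (inf_le_left : V ⊓ W ≤ V) u = F.res inf_le_right w :=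
    aux_bot_subsingleton F hs hVW _ _
  obtain ⟨z, hz⟩ := (hs.2.1 V W).2 ⟨(u, w), hc⟩
  have hz1 : F.res le_sup_left z = u := congrArg (fun t => t.val.1) hz
  have hz2 : F.res le_sup_right z = w := congrArg (fun t => t.val.2) hz
  refine ⟨F.res h3 z, ?_, ?_⟩
  · rw [← hz1, F.res_comp]
  · rw [← hz2, F.res_comp]

lemma aux_sh_dir_inj (hs : F.IsSheaf) {D : Set B} (hD : DirectedOn (· ≤ ·) D)
    {U : B} (h1 : ∀ V : D, (V : B) ≤ U) (h2 : U ≤ sSup D) {x y : F.obj U}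
    (e : ∀ V : D, F.res (h1 V) x = F.res (h1 V) y) : x = y := by
  refine aux_res_inj F (sSup_le (fun V hV => h1 ⟨V, hV⟩) : sSup D ≤ U) h2 ?_
  refine ((hs.2.2 D hD).1) ?_
  refine Subtype.ext (funext fun V => ?_)
  show F.res (le_sSup V.2) (F.res _ x) = F.res (le_sSup V.2) (F.res _ y)
  rw [F.res_comp, F.res_comp]; exact e V

lemma aux_sh_dir_surj (hs : F.IsSheaf) {D : Set B} (hD : DirectedOn (· ≤ ·) D)
    {U : B} (h1 : ∀ V : D, (V : B) ≤ U) (h2 : U ≤ sSup D) (f : ∀ V : D, F.obj V)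
    (hf : ∀ (V W : D) (h : (V : B) ≤ (W : B)), F.res h (f W) = f V) :
    ∃ x : F.obj U, ∀ V : D, F.res (h1 V) x = f V := by
  obtain ⟨z, hz⟩ := (hs.2.2 D hD).2 ⟨f, hf⟩
  refine ⟨F.res h2 z, fun V => ?_⟩
  have : F.res (le_sSup V.2) z = f V := congrFun (congrArg Subtype.val hz) V
  rw [← this, F.res_comp]

lemma aux_sh_gen_inj (hs : F.IsSheaf) {I : Type u} {a : I → B}
    (_hd : Pairwise fun i j => a i ⊓ a j = ⊥) {U : B}
    (h1 : ∀ i, a i ≤ U) (h2 : U ≤ ⨆ i, a i) {x y : F.obj U}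
    (e : ∀ i, F.res (h1 i) x = F.res (h1 i) y) : x = y := by
  classical
  have hA : ∀ (s : Finset I) (hle : s.sup a ≤ U), F.res hle x = F.res hle y := by
    intro s
    induction s using Finset.induction_on with
    | empty =>
      intro hle
      exact aux_bot_subsingleton F hs Finset.sup_empty.le _ _
    | @insert j s hj IH =>
      intro hle
      refine aux_sh_pair_inj F hs (V := a j) (W := s.sup a)
        (Finset.le_sup (Finset.mem_insert_self j s))
        (Finset.sup_mono (Finset.subset_insert j s))
        Finset.sup_insert.le ?_ ?_
      · rw [F.res_comp, F.res_comp]; exact e j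
      · rw [F.res_comp, F.res_comp]; exact IH _
  have hD : DirectedOn (· ≤ ·) (Set.range fun s : Finset I => s.sup a) := by
    rintro _ ⟨s, rfl⟩ _ ⟨t, rfl⟩
    exact ⟨(s ∪ t).sup a, ⟨s ∪ t, rfl⟩, Finset.sup_mono Finset.subset_union_left,
      Finset.sup_mono Finset.subset_union_right⟩
  have h1' : ∀ V : (Set.range fun s : Finset I => s.sup a), (V : B) ≤ U := by
    rintro ⟨_, s, rfl⟩
    exact Finset.sup_le fun i _ => h1 i
  have h2' : U ≤ sSup (Set.range fun s : Finset I => s.sup a) :=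
    h2.trans (iSup_le fun i => le_sSup ⟨{i}, Finset.sup_singleton⟩)
  refine aux_sh_dir_inj F hs hD h1' h2' ?_
  rintro ⟨_, s, rfl⟩
  exact hA s _

end SetPresheaf

namespace SetPresheaf
variable {B : Type u} [CompleteBooleanAlgebra B] (F : SetPresheaf.{u, v} B)

lemma aux_forward (hs : F.IsSheaf) : F.CarriesDisjointJoinsToProducts := by
  intro I a hd
  constructor
  · intro x y h
    exact aux_sh_gen_inj F hs hd (fun i => le_iSup a i) le_rfl (fun i => congrFun h i)
  · intro p
    classical
    -- finite gluing
    have hA : ∀ s : Finset I, ∃ y : F.obj (s.sup a),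
        ∀ i (hi : i ∈ s), F.res (Finset.le_sup hi) y = p i := by
      intro s
      induction s using Finset.induction_on with
      | empty =>
        obtain ⟨y⟩ := aux_bot_nonempty F hs (Finset.sup_empty (f := a)).le
        exact ⟨y, fun i hi => absurd hi (Finset.notMem_empty i)⟩
      | @insert j s hj IH =>
        obtain ⟨y, hy⟩ := IH
        have hdisj : a j ⊓ s.sup a ≤ ⊥ := by
          rw [Finset.sup_inf_distrib_left]
          exact Finset.sup_le fun i hi => (hd (fun h : j = i => hj (by rw [h]; exact hi))).le
        obtain ⟨x, hx1, hx2⟩ := aux_sh_pair_surj F hs hdisj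
          (Finset.le_sup (Finset.mem_insert_self j s))
          (Finset.sup_mono (Finset.subset_insert j s))
          Finset.sup_insert.le (p j) y
        refine ⟨x, fun i hi => ?_⟩
        rcases Finset.mem_insert.mp hi with rfl | hi'
        · exact hx1
        · rw [← hy i hi', ← hx2, F.res_comp]
    -- the directed set of finite partial sups
    have hD : DirectedOn (· ≤ ·) (Set.range fun s : Finset I => s.sup a) := by
      rintro _ ⟨s, rfl⟩ _ ⟨t, rfl⟩
      exact ⟨(s ∪ t).sup a, ⟨s ∪ t, rfl⟩, Finset.sup_mono Finset.subset_union_left,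
        Finset.sup_mono Finset.subset_union_right⟩
    set D := Set.range fun s : Finset I => s.sup a with hDdef
    have h1' : ∀ V : D, (V : B) ≤ ⨆ i, a i := by
      rintro ⟨_, s, rfl⟩
      exact Finset.sup_le fun i _ => le_iSup a i
    have h2' : (⨆ i, a i) ≤ sSup D :=
      iSup_le fun i => le_sSup ⟨{i}, Finset.sup_singleton⟩
    -- canonical elements on each member of D
    have hP : ∀ U : D, ∃ y : F.obj U,
        ∀ i, F.res (inf_le_right : a i ⊓ (U : B) ≤ (U : B)) y
          = F.res (inf_le_left : a i ⊓ (U : B) ≤ a i) (p i) := by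
      rintro ⟨_, s, rfl⟩
      obtain ⟨y, hy⟩ := hA s
      refine ⟨y, fun i => ?_⟩
      by_cases hi : i ∈ s
      · rw [← hy i hi, F.res_comp]
      · have hbot : a i ⊓ s.sup a ≤ ⊥ := by
          rw [Finset.sup_inf_distrib_left]
          exact Finset.sup_le fun k hk => (hd (fun h : i = k => hi (by rw [h]; exact hk))).le
        exact aux_bot_subsingleton F hs hbot _ _
    choose f hf using hP
    have huniq : ∀ (U : D) (z : F.obj U),
        (∀ i, F.res (inf_le_right : a i ⊓ (U : B) ≤ (U : B)) z
          = F.res (inf_le_left : a i ⊓ (U : B) ≤ a i) (p i)) → z = f U := by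
      intro U z hz
      have hdisj2 : Pairwise fun i j : I => (a i ⊓ (U : B)) ⊓ (a j ⊓ (U : B)) = ⊥ :=
        fun i j hij => le_antisymm
          ((inf_le_inf inf_le_left inf_le_left).trans (hd hij).le) bot_le
      have hcov2 : (U : B) ≤ ⨆ i, a i ⊓ (U : B) := by
        calc (U : B) ≤ (⨆ i, a i) ⊓ (U : B) := le_inf (h1' U) le_rfl
          _ = ⨆ i, a i ⊓ (U : B) := iSup_inf_eq _ _
      refine aux_sh_gen_inj F hs hdisj2 (fun i => inf_le_right) hcov2 ?_
      intro i
      rw [hz i, hf U i]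
    have hcompat : ∀ (U V : D) (h : (U : B) ≤ (V : B)), F.res h (f V) = f U := by
      intro U V h
      refine huniq U _ ?_
      intro i
      have step : F.res (inf_le_right : a i ⊓ (U : B) ≤ (U : B)) (F.res h (f V))
          = F.res (inf_le_inf_left (a i) h : a i ⊓ (U : B) ≤ a i ⊓ (V : B))
              (F.res (inf_le_right : a i ⊓ (V : B) ≤ (V : B)) (f V)) := by
        rw [F.res_comp, F.res_comp]
      rw [step, hf V i, F.res_comp]
    obtain ⟨x, hx⟩ := aux_sh_dir_surj F hs hD h1' h2' f hcompat
    refine ⟨x, funext fun i => ?_⟩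
    -- goal: F.res (le_iSup a i) x = p i
    set Ui : D := ⟨a i, ⟨{i}, Finset.sup_singleton⟩⟩ with hUi
    have hdisj3 : Pairwise fun j k : I => (a j ⊓ a i) ⊓ (a k ⊓ a i) = ⊥ :=
      fun j k hjk => le_antisymm
        ((inf_le_inf inf_le_left inf_le_left).trans (hd hjk).le) bot_le
    have hcov3 : a i ≤ ⨆ j, a j ⊓ a i :=
      (le_inf le_rfl le_rfl).trans (le_iSup (fun j => a j ⊓ a i) i)
    refine aux_sh_gen_inj F hs hdisj3 (fun j => inf_le_right) hcov3 ?_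
    intro j
    by_cases hji : j = i
    · subst hji
      have e1 : F.res (inf_le_right : a j ⊓ a j ≤ a j) (F.res (le_iSup a j) x)
          = F.res (inf_le_right : a j ⊓ (Ui : B) ≤ (Ui : B)) (f Ui) := by
        rw [F.res_comp, ← hx Ui, F.res_comp]
      rw [e1, hf Ui j]
    · exact aux_bot_subsingleton F hs (hd hji).le _ _

end SetPresheaf



/-- A set-valued presheaf on a complete Boolean algebra is a sheaf if and only if
it carries disjoint joins to products. -/
theorem setPresheaf_isSheaf_iff_carriesDisjointJoins
    {B : Type u} [CompleteBooleanAlgebra B] (F : SetPresheaf.{u, v} B) :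
    F.IsSheaf ↔ F.CarriesDisjointJoinsToProducts :=
  ⟨fun hs => SetPresheaf.aux_forward F hs, fun H => SetPresheaf.aux_backward F H⟩
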